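/- Every element a of a C*-algebra A is a product of two elements of A: there exists c ∈ A with a = (a a*)^{1/4} · c. More precisely, c can be taken as the norm limit of the elements ((a a*) + ε·1)^{-1/4} · a (computed in the unitization) as ε → 0⁺, and this limit lies in A. -/

import Mathlib

open Filter Topology Unitization

namespace Stmt10Aux

lemma rpow4 {s : ℝ} (hs : 0 ≤ s) : (s ^ (4⁻¹ : ℝ)) ^ (4 : ℕ) = s := by
  rw [← Real.rpow_natCast (s ^ (4⁻¹ : ℝ)) 4, ← Real.rpow_mul hs]
  norm_num

lemma L1 {t δ ε : ℝ} (ht : 0 ≤ t) (hδ : 0 < δ) (hε : 0 < ε) (hδε : δ ≤ ε) :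
    ((t + δ) ^ (-(4⁻¹ : ℝ)) - (t + ε) ^ (-(4⁻¹ : ℝ))) ^ 2 * t ≤ ε ^ (2⁻¹ : ℝ) := by
  set u := (t + δ) ^ (4⁻¹ : ℝ) with hu_def
  set v := (t + ε) ^ (4⁻¹ : ℝ) with hv_def
  have htδ : 0 < t + δ := by linarith
  have htε : 0 < t + ε := by linarith
  have hu : 0 < u := Real.rpow_pos_of_pos htδ _
  have hv : 0 < v := Real.rpow_pos_of_pos htε _
  have huv : u ≤ v := Real.rpow_le_rpow htδ.le (by linarith) (by norm_num)
  have hu4 : u ^ (4 : ℕ) = t + δ := rpow4 htδ.le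
  have hv4 : v ^ (4 : ℕ) = t + ε := rpow4 htε.le
  have hsub4 : (v - u) ^ (4 : ℕ) ≤ ε := by
    have hw : 0 ≤ v - u := sub_nonneg.mpr huv
    have h1 : (v - u) ^ (4 : ℕ) ≤ v ^ (4 : ℕ) - u ^ (4 : ℕ) := by
      nlinarith [mul_nonneg (mul_nonneg (mul_nonneg hu.le hu.le) hu.le) hw,
        mul_nonneg (mul_nonneg (mul_nonneg hu.le hu.le) hw) hw,
        mul_nonneg (mul_nonneg (mul_nonneg hu.le hw) hw) hw]
    rw [hu4, hv4] at h1; linarith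
  have he2 : (ε ^ (2⁻¹ : ℝ))^ (2 : ℕ) = ε := by
    rw [← Real.rpow_natCast (ε ^ (2⁻¹ : ℝ)) 2, ← Real.rpow_mul hε.le]; norm_num
  have hA : (v - u) ^ 2 ≤ ε ^ (2⁻¹ : ℝ) := by
    have h4 : ((v - u) ^ 2) ^ (2 : ℕ) ≤ (ε ^ (2⁻¹ : ℝ)) ^ (2 : ℕ) := by
      rw [he2]
      calc ((v - u) ^ 2) ^ (2 : ℕ) = (v - u) ^ (4 : ℕ) := by ring
        _ ≤ ε := hsub4
    exact (pow_le_pow_iff_left₀ (by positivity) (by positivity) two_ne_zero).mp h4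
  have hB : t ≤ (u * v) ^ 2 := by
    have hsq : ∀ s : ℝ, 0 < s → (s ^ (4⁻¹ : ℝ)) ^ (2 : ℕ) = s ^ (2⁻¹ : ℝ) := by
      intro s hs
      rw [← Real.rpow_natCast (s ^ (4⁻¹ : ℝ)) 2, ← Real.rpow_mul hs.le]; norm_num
    have h1 : t ^ (2⁻¹ : ℝ) ≤ u ^ 2 := by
      rw [hu_def, hsq _ htδ]
      exact Real.rpow_le_rpow ht (by linarith) (by norm_num)
    have h2 : t ^ (2⁻¹ : ℝ) ≤ v ^ 2 := by
      rw [hv_def, hsq _ htε]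
      exact Real.rpow_le_rpow ht (by linarith) (by norm_num)
    have ht12 : t ^ (2⁻¹ : ℝ) * t ^ (2⁻¹ : ℝ) = t := by
      rw [← Real.rpow_add' ht (by norm_num)]; norm_num
    calc t = t ^ (2⁻¹ : ℝ) * t ^ (2⁻¹ : ℝ) := ht12.symm
      _ ≤ u ^ 2 * v ^ 2 := by
          exact mul_le_mul h1 h2 (Real.rpow_nonneg ht _) (by positivity)
      _ = (u * v) ^ 2 := by ring
  have hfrac : (t + δ) ^ (-(4⁻¹ : ℝ)) - (t + ε) ^ (-(4⁻¹ : ℝ)) = (v - u) / (u * v) := by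
    rw [Real.rpow_neg htδ.le, Real.rpow_neg htε.le, ← hu_def, ← hv_def,
      inv_sub_inv hu.ne' hv.ne']
  rw [hfrac, div_pow, div_mul_eq_mul_div, div_le_iff₀ (by positivity)]
  exact mul_le_mul hA hB ht (by positivity)

lemma L2 {t ε : ℝ} (ht : 0 ≤ t) (hε : 0 < ε) :
    (t ^ (4⁻¹ : ℝ) * (t + ε) ^ (-(4⁻¹ : ℝ)) - 1) ^ 2 * t ≤ ε := by
  set u := t ^ (4⁻¹ : ℝ) with hu_def
  set v := (t + ε) ^ (4⁻¹ : ℝ) with hv_def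
  have htε : 0 < t + ε := by linarith
  have hu : 0 ≤ u := Real.rpow_nonneg ht _
  have hv : 0 < v := Real.rpow_pos_of_pos htε _
  have huv : u ≤ v := Real.rpow_le_rpow ht (by linarith) (by norm_num)
  have hu4 : u ^ (4 : ℕ) = t := rpow4 ht
  have hv4 : v ^ (4 : ℕ) = t + ε := rpow4 htε.le
  have hdiff : v ^ (4 : ℕ) - u ^ (4 : ℕ) = ε := by rw [hu4, hv4]; ring
  have hexpr : t ^ (4⁻¹ : ℝ) * (t + ε) ^ (-(4⁻¹ : ℝ)) - 1 = (u - v) / v := by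
    rw [Real.rpow_neg htε.le, ← hu_def, ← hv_def]
    field_simp
  rw [hexpr, div_pow, div_mul_eq_mul_div, div_le_iff₀ (by positivity)]
  have hkey : (v - u) * v ^ 3 ≤ ε := by
    nlinarith [mul_le_mul_of_nonneg_left (pow_le_pow_left₀ hu huv 3) hu]
  have h2 : (v - u) * v ≤ v ^ 2 := by nlinarith
  calc (u - v) ^ 2 * t = (v - u) ^ 2 * u ^ (4 : ℕ) := by rw [hu4]; ring
    _ ≤ (v - u) ^ 2 * v ^ (4 : ℕ) := by
        exact mul_le_mul_of_nonneg_left (pow_le_pow_left₀ hu huv 4) (sq_nonneg _)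
    _ = ((v - u) * v ^ 3) * ((v - u) * v) := by ring
    _ ≤ ε * v ^ 2 := by
        exact mul_le_mul hkey h2 (mul_nonneg (by linarith) hv.le) hε.le

lemma norm_sq_le {B : Type*} [CStarAlgebra B] [PartialOrder B] [StarOrderedRing B] (x : B) (g : ℝ → ℝ)
    (hg : ContinuousOn g (spectrum ℝ (x * star x))) {M : ℝ} (hM : 0 ≤ M)
    (h : ∀ t ∈ spectrum ℝ (x * star x), g t ^ 2 * t ≤ M) :
    ‖cfc g (x * star x) * x‖ ^ 2 ≤ M := by
  have hbsa : IsSelfAdjoint (x * star x) := .mul_star_self x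
  have hb : (0 : B) ≤ x * star x := mul_star_self_nonneg x
  have hy : IsSelfAdjoint (cfc g (x * star x)) := cfc_predicate g _
  have hmid : cfc (fun t => g t * t * g t) (x * star x)
      = cfc g (x * star x) * (x * star x) * cfc g (x * star x) := by
    rw [cfc_mul (fun t => g t * t) g _ (hg.mul continuousOn_id) hg,
      cfc_mul g (fun t : ℝ => t) _ hg (by fun_prop), cfc_id' ℝ (x * star x) hbsa]
  have key : cfc g (x * star x) * x * star (cfc g (x * star x) * x)
      = cfc (fun t => g t * t * g t) (x * star x) := by
    rw [star_mul, hy.star_eq, hmid, mul_assoc, ← mul_assoc x (star x), ← mul_assoc]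
  have hnorm : ‖cfc g (x * star x) * x‖ ^ 2
      = ‖cfc (fun t => g t * t * g t) (x * star x)‖ := by
    rw [← key, CStarRing.norm_self_mul_star, sq]
  rw [hnorm]
  refine norm_cfc_le hM fun t ht => ?_
  have ht0 : 0 ≤ t := spectrum_nonneg_of_nonneg hb ht
  have hre : g t * t * g t = g t ^ 2 * t := by ring
  rw [hre, Real.norm_eq_abs, abs_of_nonneg (by positivity)]
  exact h t ht

end Stmt10Aux

open Stmt10Aux

set_option synthInstance.maxHeartbeats 1000000 in
/-- Every element `a` of a (not necessarily unital) C*-algebra `A` is a product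
of two elements of `A`: there is `c ∈ A` with `a = (a a*)^{1/4} · c`, where `c` is the norm limit,
as `ε → 0⁺`, of the elements `((a a*) + ε·1)^{-1/4} · a` computed in the unitization of `A`
(and this limit lies in `A`). -/
theorem stmt10 {A : Type*} [NonUnitalCStarAlgebra A] (a : A) :
    ∃ c : A,
      a = cfcₙ (fun t : ℝ => t ^ (4⁻¹ : ℝ)) (a * star a) * c ∧
      Tendsto
        (fun ε : ℝ =>
          cfc (fun t : ℝ => (t + ε) ^ (-(4⁻¹ : ℝ)))
              ((a : Unitization ℂ A) * star (a : Unitization ℂ A)) *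
            (a : Unitization ℂ A))
        (𝓝[>] (0 : ℝ)) (𝓝 (c : Unitization ℂ A)) := by
  set a' : Unitization ℂ A := (a : Unitization ℂ A) with ha'
  set F : ℝ → Unitization ℂ A := fun ε : ℝ =>
    cfc (fun t : ℝ => (t + ε) ^ (-(4⁻¹ : ℝ))) (a' * star a') * a' with hF
  have hb : (0 : Unitization ℂ A) ≤ a' * star a' := mul_star_self_nonneg a'
  have hbsa : IsSelfAdjoint (a' * star a') := .mul_star_self a'
  have hspec : ∀ t ∈ spectrum ℝ (a' * star a'), 0 ≤ t :=
    fun t ht => spectrum_nonneg_of_nonneg hb ht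
  have hcont : ∀ ε : ℝ, 0 < ε →
      ContinuousOn (fun t : ℝ => (t + ε) ^ (-(4⁻¹ : ℝ))) (spectrum ℝ (a' * star a')) := by
    intro ε hε
    refine ContinuousOn.rpow_const (by fun_prop) fun t ht => Or.inl ?_
    have := hspec t ht
    positivity
  -- the Cauchy estimate
  have hest : ∀ ε δ : ℝ, 0 < ε → 0 < δ → ‖F ε - F δ‖ ^ 2 ≤ (max ε δ) ^ (2⁻¹ : ℝ) := by
    intro ε δ hε hδ
    have hFsub : F ε - F δ =
        cfc (fun t : ℝ => (t + ε) ^ (-(4⁻¹ : ℝ)) - (t + δ) ^ (-(4⁻¹ : ℝ))) (a' * star a') * a' := by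
      rw [hF, ← sub_mul, ← cfc_sub _ _ _ (hcont ε hε) (hcont δ hδ)]
    rw [hFsub]
    refine norm_sq_le a' _ ((hcont ε hε).sub (hcont δ hδ)) (by positivity) fun t ht => ?_
    have ht0 : 0 ≤ t := hspec t ht
    rcases le_total δ ε with hle | hle
    · have := L1 ht0 hδ hε hle
      calc ((t + ε) ^ (-(4⁻¹:ℝ)) - (t + δ) ^ (-(4⁻¹:ℝ))) ^ 2 * t
          = ((t + δ) ^ (-(4⁻¹:ℝ)) - (t + ε) ^ (-(4⁻¹:ℝ))) ^ 2 * t := by ring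
        _ ≤ ε ^ (2⁻¹ : ℝ) := this
        _ ≤ (max ε δ) ^ (2⁻¹ : ℝ) :=
            Real.rpow_le_rpow hε.le (le_max_left _ _) (by norm_num)
    · calc ((t + ε) ^ (-(4⁻¹:ℝ)) - (t + δ) ^ (-(4⁻¹:ℝ))) ^ 2 * t
          ≤ δ ^ (2⁻¹ : ℝ) := L1 ht0 hε hδ hle
        _ ≤ (max ε δ) ^ (2⁻¹ : ℝ) :=
            Real.rpow_le_rpow hδ.le (le_max_right _ _) (by norm_num)
  -- Cauchy
  have hC : Cauchy (Filter.map F (𝓝[>] (0 : ℝ))) := by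
    rw [Metric.cauchy_iff]
    refine ⟨Filter.map_neBot, fun r hr => ?_⟩
    set η : ℝ := r ^ 4 / 2 with hη_def
    have hη : 0 < η := by positivity
    refine ⟨F '' Set.Ioo 0 η,
      Filter.image_mem_map (Ioo_mem_nhdsGT_of_mem ⟨le_refl 0, hη⟩), ?_⟩
    rintro _ ⟨ε, hε, rfl⟩ _ ⟨δ, hδ, rfl⟩
    rw [dist_eq_norm]
    have h2 := hest ε δ hε.1 hδ.1
    have hmax : max ε δ < r ^ 4 := lt_of_lt_of_le (max_lt hε.2 hδ.2) (by
      rw [hη_def]; linarith [pow_pos hr 4])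
    have hr4 : (r ^ 4) ^ (2⁻¹ : ℝ) = r ^ 2 := by
      rw [← Real.rpow_natCast r 4, ← Real.rpow_mul hr.le, ← Real.rpow_natCast r 2]
      norm_num
    have hlt : ‖F ε - F δ‖ ^ 2 < r ^ 2 := by
      calc ‖F ε - F δ‖ ^ 2 ≤ (max ε δ) ^ (2⁻¹ : ℝ) := h2
        _ < (r ^ 4) ^ (2⁻¹ : ℝ) :=
            Real.rpow_lt_rpow (le_max_of_le_left hε.1.le) hmax (by norm_num)
        _ = r ^ 2 := hr4
    have := (pow_lt_pow_iff_left₀ (norm_nonneg _) hr.le two_ne_zero).mp hlt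
    exact this
  obtain ⟨c', hc'⟩ := CompleteSpace.complete hC
  have hT : Tendsto F (𝓝[>] (0 : ℝ)) (𝓝 c') := hc'
  -- the limit lies in (the image of) A
  have hclosed : IsClosed (Set.range ((↑) : A → Unitization ℂ A)) :=
    (Unitization.isometry_inr (𝕜 := ℂ) (A := A)).isClosedEmbedding.isClosed_range
  have hmem : ∀ᶠ ε in 𝓝[>] (0 : ℝ), F ε ∈ Set.range ((↑) : A → Unitization ℂ A) := by
    filter_upwards with ε
    refine ⟨(F ε).snd, ?_⟩
    have hfst : (F ε).fst = 0 := by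
      rw [hF]
      simp [Unitization.fst_mul, ha']
    conv_rhs => rw [← Unitization.inl_fst_add_inr_snd_eq (F ε)]
    rw [hfst, Unitization.inl_zero, zero_add]
  obtain ⟨c, hc⟩ := hclosed.mem_of_tendsto hT hmem
  rw [← hc] at hT
  refine ⟨c, ?_, hT⟩
  -- the factorization
  have hq0 : (fun t : ℝ => t ^ (4⁻¹ : ℝ)) 0 = 0 := by
    simp [Real.zero_rpow]
  have hqcont : ContinuousOn (fun t : ℝ => t ^ (4⁻¹ : ℝ)) (spectrum ℝ (a' * star a')) :=
    continuousOn_id.rpow_const fun t _ => Or.inr (by norm_num)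
  apply Unitization.inr_injective (R := ℂ)
  rw [Unitization.inr_mul, Unitization.real_cfcₙ_eq_cfc_inr (a * star a) _ hq0,
    Unitization.inr_mul, Unitization.inr_star]
  -- goal : a' = cfc q (a' * star a') * ↑c
  have h1 : Tendsto (fun ε : ℝ => cfc (fun t : ℝ => t ^ (4⁻¹ : ℝ)) (a' * star a') * F ε)
      (𝓝[>] (0 : ℝ)) (𝓝 (cfc (fun t : ℝ => t ^ (4⁻¹ : ℝ)) (a' * star a') * (c : Unitization ℂ A))) :=
    hT.const_mul _
  have h2 : Tendsto (fun ε : ℝ => cfc (fun t : ℝ => t ^ (4⁻¹ : ℝ)) (a' * star a') * F ε)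
      (𝓝[>] (0 : ℝ)) (𝓝 a') := by
    rw [← tendsto_sub_nhds_zero_iff]
    have hbound : ∀ ε ∈ Set.Ioi (0 : ℝ),
        ‖cfc (fun t : ℝ => t ^ (4⁻¹ : ℝ)) (a' * star a') * F ε - a'‖ ≤ ε ^ (2⁻¹ : ℝ) := by
      intro ε hε
      have hε' : (0 : ℝ) < ε := hε
      have hrw : cfc (fun t : ℝ => t ^ (4⁻¹ : ℝ)) (a' * star a') * F ε - a'
          = cfc (fun t : ℝ => t ^ (4⁻¹ : ℝ) * (t + ε) ^ (-(4⁻¹ : ℝ)) - 1) (a' * star a') * a' := by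
        rw [hF, ← mul_assoc, ← cfc_mul _ _ _ hqcont (hcont ε hε'),
          cfc_sub (fun t : ℝ => t ^ (4⁻¹ : ℝ) * (t + ε) ^ (-(4⁻¹ : ℝ))) _ _ (hqcont.mul (hcont ε hε')) (continuousOn_const), cfc_const_one ℝ _,
          sub_mul, one_mul]
      have hsq : ‖cfc (fun t : ℝ => t ^ (4⁻¹ : ℝ) * (t + ε) ^ (-(4⁻¹ : ℝ)) - 1)
          (a' * star a') * a'‖ ^ 2 ≤ ε :=
        norm_sq_le a' _ ((hqcont.mul (hcont ε hε')).sub continuousOn_const) hε'.le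
          fun t ht => L2 (hspec t ht) hε'
      have he2 : (ε ^ (2⁻¹ : ℝ)) ^ (2 : ℕ) = ε := by
        rw [← Real.rpow_natCast (ε ^ (2⁻¹ : ℝ)) 2, ← Real.rpow_mul hε'.le]; norm_num
      rw [hrw]
      refine (pow_le_pow_iff_left₀ (norm_nonneg _) (by positivity) two_ne_zero).mp ?_
      rw [he2]
      exact hsq
    refine squeeze_zero_norm' (a := fun ε : ℝ => ε ^ (2⁻¹ : ℝ)) ?_ ?_
    · filter_upwards [self_mem_nhdsWithin] with ε hε using hbound ε hε
    · have : Tendsto (fun ε : ℝ => ε ^ (2⁻¹ : ℝ)) (𝓝 0) (𝓝 0) := by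
        have h := (Real.continuousAt_rpow_const 0 (2⁻¹ : ℝ) (Or.inr (by norm_num))).tendsto
        simpa [Real.zero_rpow] using h
      exact this.mono_left nhdsWithin_le_nhds
  exact (tendsto_nhds_unique h2 h1)
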